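/- A non-trivial fuzzy graph G of size q satisfies γ_snR(G) = 2q if and only if every edge of G is strong and every vertex is either isolated or has exactly one strong neighbor (i.e., the strong edges form a perfect matching on the non-isolated vertices and there are no non-strong edges). -/

import Mathlib

noncomputable section
open scoped Classical
open Finset

/-- A fuzzy graph on a vertex set `V`. -/
structure FuzzyGraph (V : Type*) where
  σ : V → ℝ
  μ : V → V → ℝ
  σ_nonneg : ∀ v, 0 ≤ σ v
  σ_le_one : ∀ v, σ v ≤ 1
  μ_nonneg : ∀ u v, 0 ≤ μ u v
  μ_symm : ∀ u v, μ u v = μ v u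
  μ_le : ∀ u v, μ u v ≤ min (σ u) (σ v)
  μ_irrefl : ∀ v, μ v v = 0

namespace FuzzyGraph

variable {V : Type*} (G : FuzzyGraph V)

/-- The strength of a walk (given as its list of vertices): the minimum
membership value of its edges (1 for walks without edges). -/
def walkStrength (l : List V) : ℝ :=
  ((l.zip l.tail).map fun p => G.μ p.1 p.2).foldr min 1

/-- `l` is a `u`–`v` walk: it starts at `u`, ends at `v`, and consecutive
vertices are joined by edges of positive membership. -/
def IsWalk (u v : V) (l : List V) : Prop :=
  l.head? = some u ∧ l.getLast? = some v ∧ l.Chain' (fun a b => 0 < G.μ a b)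

/-- `CONN_G(u,v)`: the maximum strength over all `u`–`v` paths. -/
def conn (u v : V) : ℝ :=
  sSup {s | ∃ l : List V, G.IsWalk u v l ∧ 2 ≤ l.length ∧ s = G.walkStrength l}

/-- The edge `(u,v)` is strong. -/
def StrongEdge (u v : V) : Prop :=
  0 < G.μ u v ∧ G.μ u v = G.conn u v

/-- `μ_s(u)`: the minimum membership value among strong edges at `u`
(`0` if `u` has no strong neighbor, via `Real.sInf_empty`). -/
def mus (u : V) : ℝ :=
  sInf {x | ∃ v, G.StrongEdge u v ∧ x = G.μ u v}

/-- The strong neighborhood degree `d_SN(v)`. -/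
def dSN [Fintype V] (v : V) : ℝ :=
  ∑ u ∈ Finset.univ.filter (fun u => G.StrongEdge v u), G.σ u

/-- `D` is a strong dominating set. -/
def IsStrongDomSet (D : Finset V) : Prop :=
  ∀ v, v ∉ D → ∃ u ∈ D, G.StrongEdge v u

/-- The weight of a strong dominating set. -/
def domWeight (D : Finset V) : ℝ := ∑ u ∈ D, G.mus u

/-- The strong domination number `γ_s(G)`. -/
def gammaS [Fintype V] : ℝ :=
  sInf {w | ∃ D : Finset V, G.IsStrongDomSet D ∧ w = G.domWeight D}

/-- `f` is a strong-neighbors Roman dominating function (SNRDF). -/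
def IsSNRDF (f : V → ℕ) : Prop :=
  (∀ v, f v ≤ 2) ∧ ∀ v, f v = 0 → ∃ u, G.StrongEdge v u ∧ f u = 2

/-- The weight of an SNRDF. -/
def snrdfWeight [Fintype V] (f : V → ℕ) : ℝ := ∑ v, (f v : ℝ) * G.mus v

/-- The strong-neighbors Roman domination number `γ_snR(G)`. -/
def gammaSnR [Fintype V] : ℝ :=
  sInf {w | ∃ f : V → ℕ, G.IsSNRDF f ∧ w = G.snrdfWeight f}

/-- The fuzzy subgraph induced by the vertices satisfying `p`. -/
def induce (p : V → Prop) : FuzzyGraph {v // p v} where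
  σ v := G.σ v
  μ u v := G.μ u v
  σ_nonneg v := G.σ_nonneg v
  σ_le_one v := G.σ_le_one v
  μ_nonneg u v := G.μ_nonneg u v
  μ_symm u v := G.μ_symm u v
  μ_le u v := G.μ_le u v
  μ_irrefl v := G.μ_irrefl v

/-- The minimum membership value among the strong edges of `G`. -/
def muMin : ℝ := sInf {x | ∃ u v, G.StrongEdge u v ∧ x = G.μ u v}

/-- The complement of a fuzzy graph. -/
def compl : FuzzyGraph V where
  σ := G.σ
  μ u v := if u = v then 0 else min (G.σ u) (G.σ v) - G.μ u v
  σ_nonneg := G.σ_nonneg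
  σ_le_one := G.σ_le_one
  μ_nonneg u v := by
    by_cases h : u = v
    · simp [h]
    · simp only [if_neg h, sub_nonneg]
      exact G.μ_le u v
  μ_symm u v := by
    by_cases h : u = v
    · simp [h]
    · have h' : ¬ v = u := fun hh => h hh.symm
      simp only [if_neg h, if_neg h', min_comm (G.σ u), G.μ_symm u v]
  μ_le u v := by
    by_cases h : u = v
    · subst h
      simp only [if_pos rfl, le_min_iff]
      exact ⟨G.σ_nonneg u, G.σ_nonneg u⟩
    · simp only [if_neg h]
      have := G.μ_nonneg u v
      linarith
  μ_irrefl v := by simp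

end FuzzyGraph


namespace FuzzyGraph

variable {V : Type*} (G : FuzzyGraph V)

lemma zip_tail_append' (M : List V) (a : V) (h : M ≠ []) :
    (M ++ [a]).zip (M ++ [a]).tail = M.zip M.tail ++ [(M.getLast h, a)] := by
  induction M with
  | nil => simp at h
  | cons x M ih =>
    cases M with
    | nil => simp
    | cons y M' =>
      have := ih (by simp)
      simp only [List.cons_append, List.zip_cons_cons, List.tail_cons] at this ⊢
      rw [this]
      simp [List.getLast]

lemma rev_zip' (l : List V) :
    l.reverse.zip l.reverse.tail = ((l.zip l.tail).map Prod.swap).reverse := by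
  induction l with
  | nil => simp
  | cons a t ih =>
    cases t with
    | nil => simp
    | cons b t' =>
      have hne : (b :: t').reverse ≠ [] := by simp
      have h1 : (a :: b :: t').reverse = (b :: t').reverse ++ [a] := by simp
      rw [h1, zip_tail_append' _ _ hne, ih]
      have h2 : (b :: t').reverse.getLast hne = b := by
        rw [List.getLast_reverse]; simp
      rw [h2]
      simp

lemma walkStrength_reverse (l : List V) :
    G.walkStrength l.reverse = G.walkStrength l := by
  unfold walkStrength
  rw [rev_zip', List.map_reverse, List.map_map]
  have hmap : ((fun p : V × V => G.μ p.1 p.2) ∘ Prod.swap) = fun p : V × V => G.μ p.1 p.2 := by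
    funext p; exact (G.μ_symm p.2 p.1)
  rw [hmap]
  haveI : LeftCommutative (min : ℝ → ℝ → ℝ) := ⟨fun a b c => min_left_comm a b c⟩
  exact ((l.zip l.tail).map fun p : V × V => G.μ p.1 p.2).reverse_perm.foldr_eq 1

lemma isWalk_reverse {u v : V} {l : List V} (h : G.IsWalk u v l) : G.IsWalk v u l.reverse := by
  obtain ⟨h1, h2, h3⟩ := h
  refine ⟨?_, ?_, ?_⟩
  · rw [List.head?_reverse]; exact h2
  · rw [List.getLast?_reverse]; exact h1
  · unfold List.Chain' at h3 ⊢; rw [List.isChain_reverse]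
    refine h3.imp ?_
    intro a b hab
    simpa [flip, G.μ_symm] using hab

lemma conn_symm (u v : V) : G.conn u v = G.conn v u := by
  unfold conn
  congr 1
  ext s
  constructor <;> rintro ⟨l, hw, hl, rfl⟩
  · exact ⟨l.reverse, G.isWalk_reverse hw, by simpa using hl, (G.walkStrength_reverse l).symm⟩
  · exact ⟨l.reverse, G.isWalk_reverse hw, by simpa using hl, (G.walkStrength_reverse l).symm⟩

lemma strongEdge_symm {u v : V} (h : G.StrongEdge u v) : G.StrongEdge v u := by
  obtain ⟨h1, h2⟩ := h
  refine ⟨by rwa [← G.μ_symm], ?_⟩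
  rw [← G.μ_symm, ← G.conn_symm]; exact h2

lemma strongEdge_ne {u v : V} (h : G.StrongEdge u v) : u ≠ v := by
  rintro rfl; simpa [G.μ_irrefl] using h.1

lemma mus_nonneg (u : V) : 0 ≤ G.mus u := by
  apply Real.sInf_nonneg
  rintro x ⟨v, _, rfl⟩
  exact G.μ_nonneg u v

lemma mus_le {u v : V} (h : G.StrongEdge u v) : G.mus u ≤ G.μ u v :=
  csInf_le ⟨0, by rintro x ⟨w, _, rfl⟩; exact G.μ_nonneg u w⟩ ⟨v, h, rfl⟩

lemma mus_eq_zero {u : V} (h : ¬ ∃ v, G.StrongEdge u v) : G.mus u = 0 := by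
  unfold mus
  convert Real.sInf_empty
  ext x
  simp only [Set.mem_setOf_eq, Set.mem_empty_iff_false, iff_false]
  rintro ⟨v, hv, rfl⟩
  exact h ⟨v, hv⟩

lemma mus_eq_of_unique {u v : V} (h : G.StrongEdge u v)
    (huniq : ∀ w, G.StrongEdge u w → w = v) : G.mus u = G.μ u v := by
  unfold mus
  have : {x | ∃ w, G.StrongEdge u w ∧ x = G.μ u w} = {G.μ u v} := by
    ext x
    simp only [Set.mem_setOf_eq, Set.mem_singleton_iff]
    constructor
    · rintro ⟨w, hw, rfl⟩; rw [huniq w hw]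
    · rintro rfl; exact ⟨v, h, rfl⟩
  rw [this, csInf_singleton]

lemma weight_nonneg [Fintype V] (f : V → ℕ) : 0 ≤ G.snrdfWeight f :=
  Finset.sum_nonneg fun v _ => mul_nonneg (by positivity) (G.mus_nonneg v)

lemma bddBelow_weights [Fintype V] :
    BddBelow {w | ∃ f : V → ℕ, G.IsSNRDF f ∧ w = G.snrdfWeight f} := by
  refine ⟨0, ?_⟩
  rintro w ⟨f, _, rfl⟩
  exact G.weight_nonneg f

lemma isSNRDF_two : G.IsSNRDF (fun _ => 2) :=
  ⟨fun _ => le_refl 2, fun v h => by simp at h⟩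

lemma core [Fintype V] (D : Finset V)
    (hind : ∀ v ∈ D, ∀ u ∈ D, ¬ G.StrongEdge v u)
    (hdom : ∀ v ∉ D, (∃ u, G.StrongEdge v u) → ∃ u ∈ D, G.StrongEdge v u)
    (N : V → V) (hN : ∀ v, (∃ u, G.StrongEdge v u) → G.StrongEdge v (N v))
    (P : Finset (V × V))
    (hP : ∀ v ∈ D, (∃ u, G.StrongEdge v u) → ((v, N v) ∈ P ∧ (N v, v) ∈ P)) :
    ∃ f, G.IsSNRDF f ∧ G.snrdfWeight f ≤ ∑ p ∈ P, G.μ p.1 p.2 := by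
  classical
  set f : V → ℕ := fun v => if v ∈ D then 2 else if ∃ u, G.StrongEdge v u then 0 else 1 with hf
  have hsn : G.IsSNRDF f := by
    constructor
    · intro v; by_cases h1 : v ∈ D <;> by_cases h2 : ∃ u, G.StrongEdge v u <;> simp [hf, h1, h2]
    · intro v hv
      by_cases h1 : v ∈ D
      · simp [hf, h1] at hv
      · by_cases h2 : ∃ u, G.StrongEdge v u
        · obtain ⟨u, hu, hu2⟩ := hdom v h1 h2
          refine ⟨u, hu2, by simp [hf, hu]⟩
        · simp [hf, h1, h2] at hv
  set D₀ : Finset V := D.filter (fun v => ∃ u, G.StrongEdge v u) with hD₀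
  have hw : G.snrdfWeight f = ∑ v ∈ D₀, 2 * G.mus v := by
    rw [snrdfWeight, ← Finset.sum_subset (Finset.subset_univ D₀)]
    · apply Finset.sum_congr rfl
      intro v hv
      rw [hD₀, Finset.mem_filter] at hv
      simp [hf, hv.1]
    · intro v _ hv
      rw [hD₀, Finset.mem_filter] at hv
      push_neg at hv
      by_cases h1 : v ∈ D
      · rw [G.mus_eq_zero (by push_neg; exact hv h1)]; ring
      · by_cases h2 : ∃ u, G.StrongEdge v u
        · simp [hf, h1, h2]
        · rw [G.mus_eq_zero h2]; ring
  set g : V → Finset (V × V) := fun v => {(v, N v), (N v, v)} with hg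
  have hstep : ∀ v ∈ D₀, 2 * G.mus v ≤ ∑ p ∈ g v, G.μ p.1 p.2 := by
    intro v hv
    rw [hD₀, Finset.mem_filter] at hv
    have hsv := hN v hv.2
    have hne : (v, N v) ≠ (N v, v) := by
      intro h; exact G.strongEdge_ne hsv (congrArg Prod.fst h)
    rw [hg]
    rw [Finset.sum_pair hne]
    have := G.mus_le hsv
    have := G.μ_symm v (N v)
    simp only
    linarith
  have hdisj : (↑D₀ : Set V).PairwiseDisjoint g := by
    intro a ha b hb hab
    rw [Finset.mem_coe, hD₀, Finset.mem_filter] at ha hb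
    rw [Function.onFun, Finset.disjoint_left]
    intro p hp hp'
    have hNa := hN a ha.2
    have hNb := hN b hb.2
    rw [hg] at hp hp'
    simp only [Finset.mem_insert, Finset.mem_singleton] at hp hp'
    rcases hp with h | h <;> rcases hp' with h' | h' <;> rw [h] at h'
    · exact hab (congrArg Prod.fst h')
    · exact hind b hb.1 a ha.1 (by
        have h1 : a = N b := congrArg Prod.fst h'
        rw [h1]; exact hNb)
    · exact hind a ha.1 b hb.1 (by
        have h1 : N a = b := congrArg Prod.fst h'
        rw [← h1]; exact hNa)
    · exact hab (congrArg Prod.snd h')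
  have hsub : D₀.biUnion g ⊆ P := by
    intro p hp
    rw [Finset.mem_biUnion] at hp
    obtain ⟨v, hv, hpv⟩ := hp
    rw [hD₀, Finset.mem_filter] at hv
    have := hP v hv.1 hv.2
    rw [hg] at hpv
    simp only [Finset.mem_insert, Finset.mem_singleton] at hpv
    rcases hpv with rfl | rfl
    · exact this.1
    · exact this.2
  refine ⟨f, hsn, ?_⟩
  calc G.snrdfWeight f = ∑ v ∈ D₀, 2 * G.mus v := hw
    _ ≤ ∑ v ∈ D₀, ∑ p ∈ g v, G.μ p.1 p.2 := Finset.sum_le_sum hstep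
    _ = ∑ p ∈ D₀.biUnion g, G.μ p.1 p.2 := (Finset.sum_biUnion hdisj).symm
    _ ≤ ∑ p ∈ P, G.μ p.1 p.2 := Finset.sum_le_sum_of_subset_of_nonneg hsub
        (fun p _ _ => G.μ_nonneg p.1 p.2)

lemma exists_maxInd [Fintype V] (x : V) :
    ∃ D : Finset V, x ∈ D ∧ (∀ v ∈ D, ∀ u ∈ D, ¬ G.StrongEdge v u) ∧
      (∀ v ∉ D, (∃ u, G.StrongEdge v u) → ∃ u ∈ D, G.StrongEdge v u) := by
  classical
  set C : Finset (Finset V) :=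
    Finset.univ.filter (fun D => x ∈ D ∧ ∀ v ∈ D, ∀ u ∈ D, ¬ G.StrongEdge v u) with hC
  have hxC : ({x} : Finset V) ∈ C := by
    rw [hC, Finset.mem_filter]
    refine ⟨Finset.mem_univ _, Finset.mem_singleton_self x, ?_⟩
    intro v hv u hu
    rw [Finset.mem_singleton] at hv hu
    subst hv; subst hu
    exact fun h => G.strongEdge_ne h rfl
  obtain ⟨D, hD, hmax⟩ := C.exists_maximal ⟨_, hxC⟩
  rw [hC, Finset.mem_filter] at hD
  refine ⟨D, hD.2.1, hD.2.2, ?_⟩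
  intro v hv _
  by_contra hcon
  push_neg at hcon
  have hD' : insert v D ∈ C := by
    rw [hC, Finset.mem_filter]
    refine ⟨Finset.mem_univ _, Finset.mem_insert_of_mem hD.2.1, ?_⟩
    intro a ha b hb
    rw [Finset.mem_insert] at ha hb
    rcases ha with rfl | ha <;> rcases hb with rfl | hb
    · exact fun h => G.strongEdge_ne h rfl
    · exact hcon b hb
    · exact fun h => hcon a ha (G.strongEdge_symm h)
    · exact hD.2.2 a ha b hb
  exact (Finset.ssubset_insert hv).2 (hmax hD' (Finset.ssubset_insert hv).1)

lemma lb [Fintype V]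
    (hA : ∀ u v, 0 < G.μ u v → G.StrongEdge u v)
    (hB : ∀ u : V, (∀ v, G.μ u v = 0) ∨ (∃! v, G.StrongEdge u v))
    (f : V → ℕ) (hf : G.IsSNRDF f) :
    (∑ u : V, ∑ v : V, G.μ u v) ≤ G.snrdfWeight f := by
  classical
  set W : V → V := fun u => if h : ∃ v, G.StrongEdge u v then h.choose else u with hW
  have w1 : ∀ u, (∃ v, G.StrongEdge u v) → G.StrongEdge u (W u) := by
    intro u h; rw [hW]; simpa only [dif_pos h] using h.choose_spec
  have w2 : ∀ u, ¬ (∃ v, G.StrongEdge u v) → W u = u := by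
    intro u h; rw [hW]; simp only [dif_neg h]
  have w3 : ∀ u, ∀ w, G.StrongEdge u w → w = W u := by
    intro u w hw
    have hex : ∃ v, G.StrongEdge u v := ⟨w, hw⟩
    rcases hB u with h | ⟨v, hv, huniq⟩
    · exact absurd (h w) (ne_of_gt hw.1)
    · rw [huniq w hw, huniq (W u) (w1 u hex)]
  have w4 : Function.Involutive W := by
    intro u
    by_cases h : ∃ v, G.StrongEdge u v
    · have h1 := w1 u h
      have h2 : G.StrongEdge (W u) u := G.strongEdge_symm h1
      exact (w3 (W u) u h2).symm
    · rw [w2 u h, w2 u h]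
  have w5 : ∀ u, G.mus (W u) = G.mus u := by
    intro u
    by_cases h : ∃ v, G.StrongEdge u v
    · have h1 := w1 u h
      have h2 : G.StrongEdge (W u) u := G.strongEdge_symm h1
      rw [G.mus_eq_of_unique h1 (fun w hw => (w3 u w hw).symm ▸ rfl),
          G.mus_eq_of_unique h2 ?_, G.μ_symm]
      intro w hw
      have := w3 (W u) w hw
      rw [this, w4 u]
    · rw [w2 u h]
  have s1 : (∑ u : V, ∑ v : V, G.μ u v) = ∑ u : V, G.mus u := by
    apply Finset.sum_congr rfl
    intro u _
    by_cases h : ∃ v, G.StrongEdge u v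
    · have h1 := w1 u h
      rw [G.mus_eq_of_unique h1 (fun w hw => (w3 u w hw))]
      apply Finset.sum_eq_single (W u)
      · intro v _ hv
        by_contra hc
        have : 0 < G.μ u v := lt_of_le_of_ne (G.μ_nonneg u v) (Ne.symm hc)
        exact hv (w3 u v (hA u v this))
      · intro hc; exact absurd (Finset.mem_univ _) hc
    · rw [G.mus_eq_zero h]
      apply Finset.sum_eq_zero
      intro v _
      by_contra hc
      have : 0 < G.μ u v := lt_of_le_of_ne (G.μ_nonneg u v) (Ne.symm hc)
      exact h ⟨v, hA u v this⟩
  have key : ∀ u : V, 2 * G.mus u ≤ ((f u : ℝ) + (f (W u) : ℝ)) * G.mus u := by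
    intro u
    by_cases h : ∃ v, G.StrongEdge u v
    · have h1 := w1 u h
      have h2 : G.StrongEdge (W u) u := G.strongEdge_symm h1
      have hge : 2 ≤ f u + f (W u) := by
        by_cases h0 : f u = 0
        · obtain ⟨z, hz, hz2⟩ := hf.2 u h0
          rw [w3 u z hz] at hz2
          omega
        · by_cases h0' : f (W u) = 0
          · obtain ⟨z, hz, hz2⟩ := hf.2 (W u) h0'
            have := w3 (W u) z hz
            rw [this, w4 u] at hz2
            omega
          · omega
      apply mul_le_mul_of_nonneg_right _ (G.mus_nonneg u)
      exact_mod_cast hge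
    · rw [G.mus_eq_zero h]; simp
  have reidx : ∑ u : V, (f (W u) : ℝ) * G.mus (W u) = ∑ u : V, (f u : ℝ) * G.mus u := by
    exact Equiv.sum_comp w4.toPerm (fun u => (f u : ℝ) * G.mus u)
  have hsum : 2 * G.snrdfWeight f ≥ 2 * ∑ u : V, G.mus u := by
    have h1 : 2 * G.snrdfWeight f
        = ∑ u : V, ((f u : ℝ) + (f (W u) : ℝ)) * G.mus u := by
      have hterm : ∀ u : V, ((f u : ℝ) + (f (W u) : ℝ)) * G.mus u
          = (f u : ℝ) * G.mus u + (f (W u) : ℝ) * G.mus (W u) := by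
        intro u; rw [w5 u]; ring
      rw [Finset.sum_congr rfl (fun u _ => hterm u), Finset.sum_add_distrib, reidx,
        snrdfWeight]
      ring
    rw [ge_iff_le, h1, Finset.mul_sum]
    exact Finset.sum_le_sum (fun u _ => key u)
  rw [s1]
  linarith

lemma strict_ub [Fintype V] (x y : V) (hxy : 0 < G.μ x y)
    (D : Finset V)
    (hind : ∀ v ∈ D, ∀ u ∈ D, ¬ G.StrongEdge v u)
    (hdom : ∀ v ∉ D, (∃ u, G.StrongEdge v u) → ∃ u ∈ D, G.StrongEdge v u)
    (N : V → V) (hN : ∀ v, (∃ u, G.StrongEdge v u) → G.StrongEdge v (N v))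
    (hP : ∀ v ∈ D, (∃ u, G.StrongEdge v u) → (v, N v) ≠ (x, y) ∧ (N v, v) ≠ (x, y)) :
    G.gammaSnR < ∑ u : V, ∑ v : V, G.μ u v := by
  classical
  obtain ⟨f, hf, hwle⟩ := G.core D hind hdom N hN ((Finset.univ : Finset (V × V)).erase (x, y))
    (by
      intro v hv hsv
      have := hP v hv hsv
      exact ⟨Finset.mem_erase.2 ⟨this.1, Finset.mem_univ _⟩,
        Finset.mem_erase.2 ⟨this.2, Finset.mem_univ _⟩⟩)
  have h1 : G.gammaSnR ≤ G.snrdfWeight f :=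
    csInf_le G.bddBelow_weights ⟨f, hf, rfl⟩
  have h3 : (∑ p ∈ (Finset.univ : Finset (V × V)).erase (x, y), G.μ p.1 p.2)
      + G.μ x y = ∑ u : V, ∑ v : V, G.μ u v := by
    have := Finset.sum_erase_add (Finset.univ : Finset (V × V))
      (fun p : V × V => G.μ p.1 p.2) (Finset.mem_univ (x, y))
    rw [this, Fintype.sum_prod_type]
  linarith

end FuzzyGraph

/-- `γ_snR(G) = 2q` iff all edges are strong and every vertex
is isolated or has a unique strong neighbor. -/
theorem gammaSnR_eq_two_q_iff {V : Type*} [Fintype V]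
    (G : FuzzyGraph V) (hnt : ∃ u v : V, 0 < G.μ u v) :
    G.gammaSnR = 2 * ((∑ u : V, ∑ v : V, G.μ u v) / 2) ↔
      (∀ u v : V, 0 < G.μ u v → G.StrongEdge u v) ∧
        ∀ u : V, (∀ v, G.μ u v = 0) ∨ (∃! v, G.StrongEdge u v) := by
  classical
  have hSval : 2 * ((∑ u : V, ∑ v : V, G.μ u v) / 2) = ∑ u : V, ∑ v : V, G.μ u v := by
    ring
  rw [hSval]
  set N : V → V := fun v => if h : ∃ u, G.StrongEdge v u then h.choose else v with hNdef
  have hN : ∀ v, (∃ u, G.StrongEdge v u) → G.StrongEdge v (N v) := by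
    intro v h; rw [hNdef]; simpa only [dif_pos h] using h.choose_spec
  constructor
  · intro heq
    by_cases hA : ∀ u v : V, 0 < G.μ u v → G.StrongEdge u v
    · refine ⟨hA, ?_⟩
      intro u
      by_contra hu
      push_neg at hu
      obtain ⟨hu1, hu2⟩ := hu
      obtain ⟨v, hv⟩ := hu1
      have hvpos : 0 < G.μ u v := lt_of_le_of_ne (G.μ_nonneg u v) (Ne.symm hv)
      have hsv : G.StrongEdge u v := hA _ _ hvpos
      have hu2' : ∀ w, G.StrongEdge u w → ∃ z, G.StrongEdge u z ∧ z ≠ w := by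
        rw [ExistsUnique] at hu2
        push_neg at hu2
        exact hu2
      obtain ⟨w, hw, hwv⟩ := hu2' v hsv
      obtain ⟨D, hxD, hind, hdom⟩ := G.exists_maxInd u
      set y' : V := if N u = v then w else v with hy'
      have hsy' : G.StrongEdge u y' := by
        rw [hy']; by_cases h : N u = v <;> simp [h, hw, hsv]
      have hNy' : N u ≠ y' := by
        by_cases h : N u = v
        · rw [hy', if_pos h, h]
          exact Ne.symm hwv
        · rw [hy', if_neg h]
          exact h
      have hy'pos : 0 < G.μ u y' := hsy'.1
      have hlt := G.strict_ub u y' hy'pos D hind hdom N hN ?_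
      · linarith [heq ▸ hlt]
      · intro a ha hsa
        constructor
        · intro hcon
          have h1 : a = u := congrArg Prod.fst hcon
          have h2 : N a = y' := congrArg Prod.snd hcon
          exact hNy' (h1 ▸ h2)
        · intro hcon
          have h1 : N a = u := congrArg Prod.fst hcon
          have h2 : a = y' := congrArg Prod.snd hcon
          exact hind u hxD a ha (h2 ▸ hsy')
    · exfalso
      push_neg at hA
      obtain ⟨x, y, hpos, hns⟩ := hA
      obtain ⟨D, hxD, hind, hdom⟩ := G.exists_maxInd x
      have hlt := G.strict_ub x y hpos D hind hdom N hN ?_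
      · linarith [heq ▸ hlt]
      · intro a ha hsa
        have hNa := hN a hsa
        constructor
        · intro hcon
          have h1 : a = x := congrArg Prod.fst hcon
          have h2 : N a = y := congrArg Prod.snd hcon
          exact hns (h1 ▸ h2 ▸ hNa)
        · intro hcon
          have h1 : N a = x := congrArg Prod.fst hcon
          have h2 : a = y := congrArg Prod.snd hcon
          have : G.StrongEdge y x := h1 ▸ h2 ▸ hNa
          exact hns (G.strongEdge_symm this)
  · rintro ⟨hA, hB⟩
    apply le_antisymm
    · obtain ⟨x₀, y₀, hxy₀⟩ := hnt
      obtain ⟨D, hxD, hind, hdom⟩ := G.exists_maxInd x₀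
      obtain ⟨f, hf, hwle⟩ := G.core D hind hdom N hN (Finset.univ : Finset (V × V))
        (fun v _ _ => ⟨Finset.mem_univ _, Finset.mem_univ _⟩)
      have h1 : G.gammaSnR ≤ G.snrdfWeight f :=
        csInf_le G.bddBelow_weights ⟨f, hf, rfl⟩
      have h2 : (∑ p ∈ (Finset.univ : Finset (V × V)), G.μ p.1 p.2)
          = ∑ u : V, ∑ v : V, G.μ u v := Fintype.sum_prod_type _
      linarith
    · refine le_csInf ⟨G.snrdfWeight (fun _ => (2 : ℕ)), ⟨fun _ => 2, G.isSNRDF_two, rfl⟩⟩ ?_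
      rintro w ⟨f, hf, rfl⟩
      exact G.lb hA hB f hf
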